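/- Let ψ be a state that is stationary under U (Uψ = ψ), and define the projected state ψ' by ψ'(a,b) = avg_ψ(a) if a ∉ M, and ψ'(a,b) = ψ(a,b) − avg_ψ(a) if a ∈ M. Then ⟨ψ₀, ψ'⟩ = ⟨ψ₀, ψ⟩ and ‖ψ'‖ ≤ ‖ψ‖. -/

import Mathlib

open Finset

variable {V : Type*} [Fintype V] [DecidableEq V]

/-- The average of the amplitudes of the state `ψ` at vertex `a`:
`avg_ψ(a) = (1/deg a) * ∑_{b ~ a} ψ(a,b)`. -/
noncomputable def avgQ (G : SimpleGraph V) [DecidableRel G.Adj] (ψ : V → V → ℂ) (a : V) : ℂ :=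
  (G.degree a : ℂ)⁻¹ * ∑ b ∈ G.neighborFinset a, ψ a b

/-- The oracle query `Q`: flips the sign of amplitudes at marked vertices. -/
def Qop (M : Finset V) (ψ : V → V → ℂ) : V → V → ℂ :=
  fun a b => if a ∈ M then -ψ a b else ψ a b

/-- The Grover diffusion coin `C`: inversion about the mean at each vertex. -/
noncomputable def Cop (G : SimpleGraph V) [DecidableRel G.Adj] (ψ : V → V → ℂ) : V → V → ℂ :=
  fun a b => 2 * avgQ G ψ a - ψ a b

/-- The flip-flop shift `S`. -/
def Sop (ψ : V → V → ℂ) : V → V → ℂ :=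
  fun a b => ψ b a

/-- The quantum walk search operator `U = S ∘ C ∘ Q`. -/
noncomputable def Uop (G : SimpleGraph V) [DecidableRel G.Adj] (M : Finset V)
    (ψ : V → V → ℂ) : V → V → ℂ :=
  Sop (Cop G (Qop M ψ))

/-- A state is stationary under `U` if `Uψ = ψ` on every dart of `G`. -/
def StationaryU (G : SimpleGraph V) [DecidableRel G.Adj] (M : Finset V)
    (ψ : V → V → ℂ) : Prop :=
  ∀ a b, G.Adj a b → Uop G M ψ a b = ψ a b

/-- The inner product of two states, summing over all darts of `G`. -/
noncomputable def dInner (G : SimpleGraph V) [DecidableRel G.Adj] (φ ψ : V → V → ℂ) : ℂ :=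
  ∑ a : V, ∑ b ∈ G.neighborFinset a, (starRingEnd ℂ) (φ a b) * ψ a b

/-- The initial uniform state, assigning `1/√(2|E|)` to every dart. -/
noncomputable def psi0 (G : SimpleGraph V) [DecidableRel G.Adj] : V → V → ℂ :=
  fun _ _ => (((Real.sqrt (2 * (G.edgeFinset.card : ℝ)))⁻¹ : ℝ) : ℂ)

/-- The norm of a state: `‖ψ‖ = √⟨ψ,ψ⟩`, summing over all darts of `G`. -/
noncomputable def dNorm (G : SimpleGraph V) [DecidableRel G.Adj] (ψ : V → V → ℂ) : ℝ :=
  Real.sqrt (∑ a : V, ∑ b ∈ G.neighborFinset a, Complex.normSq (ψ a b))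

lemma dart_sum_swap (G : SimpleGraph V) [DecidableRel G.Adj] (f : V → V → ℂ) :
    ∑ a : V, ∑ b ∈ G.neighborFinset a, f a b = ∑ a : V, ∑ b ∈ G.neighborFinset a, f b a := by
  have key : ∀ g : V → V → ℂ, ∑ a : V, ∑ b ∈ G.neighborFinset a, g a b
      = ∑ a : V, ∑ b : V, if G.Adj a b then g a b else 0 := by
    intro g
    refine Finset.sum_congr rfl fun a _ => ?_
    rw [← Finset.sum_filter]
    refine Finset.sum_congr ?_ fun _ _ => rfl
    ext b; simp [SimpleGraph.mem_neighborFinset]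
  rw [key, key, Finset.sum_comm]
  refine Finset.sum_congr rfl fun a _ => Finset.sum_congr rfl fun b _ => ?_
  by_cases h : G.Adj a b
  · simp [h, h.symm]
  · simp only [h, if_false]
    rw [if_neg fun hh => h hh.symm]

/-- Projecting a stationary state preserves its overlap with the initial uniform state and
does not increase its norm. -/
theorem projected_state_overlap_and_norm (G : SimpleGraph V) [DecidableRel G.Adj]
    (M : Finset V) (hdeg : ∀ v, 0 < G.degree v) (ψ : V → V → ℂ)
    (hstat : StationaryU G M ψ) (ψ' : V → V → ℂ)
    (hdef : ∀ a b, ψ' a b = if a ∈ M then ψ a b - avgQ G ψ a else avgQ G ψ a) :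
    dInner G (psi0 G) ψ' = dInner G (psi0 G) ψ ∧ dNorm G ψ' ≤ dNorm G ψ := by
  set S : V → ℂ := fun a => ∑ b ∈ G.neighborFinset a, ψ a b with hSdef
  have hdegC : ∀ a, (G.degree a : ℂ) ≠ 0 := fun a =>
    Nat.cast_ne_zero.mpr (hdeg a).ne'
  have hSa : ∀ a, (G.degree a : ℂ) * avgQ G ψ a = S a := by
    intro a
    rw [avgQ, ← mul_assoc, mul_inv_cancel₀ (hdegC a), one_mul]
  -- stationarity rewritten
  have hQavg : ∀ b, avgQ G (Qop M ψ) b = (if b ∈ M then -1 else 1) * avgQ G ψ b := by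
    intro b
    by_cases hb : b ∈ M <;> simp [avgQ, Qop, hb] <;> ring
  have hstep : ∀ a b, G.Adj a b →
      ψ a b = (if b ∈ M then (-1 : ℂ) else 1) * (2 * avgQ G ψ b - ψ b a) := by
    intro a b hab
    have h := hstat a b hab
    simp only [Uop, Sop, Cop, hQavg, Qop] at h
    by_cases hb : b ∈ M <;> simp only [hb, if_true, if_false] at h ⊢ <;> rw [← h] <;> ring
  -- the sum identity
  have hsum_const_avg : ∀ a, ∑ _b ∈ G.neighborFinset a, avgQ G ψ a = S a := by
    intro a
    rw [Finset.sum_const, SimpleGraph.card_neighborFinset_eq_degree, nsmul_eq_mul, hSa]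
  have hT : ∑ a : V, S a = ∑ a : V, (if a ∈ M then (-1 : ℂ) else 1) * S a := by
    calc ∑ a : V, S a
        = ∑ a : V, ∑ b ∈ G.neighborFinset a,
            (if b ∈ M then (-1 : ℂ) else 1) * (2 * avgQ G ψ b - ψ b a) := by
          refine Finset.sum_congr rfl fun a _ => Finset.sum_congr rfl fun b hb => ?_
          exact hstep a b ((SimpleGraph.mem_neighborFinset _ _ _).1 hb)
      _ = ∑ a : V, ∑ b ∈ G.neighborFinset a,
            (if a ∈ M then (-1 : ℂ) else 1) * (2 * avgQ G ψ a - ψ a b) := by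
          exact dart_sum_swap G (fun a b => (if b ∈ M then (-1 : ℂ) else 1) * (2 * avgQ G ψ b - ψ b a))
      _ = ∑ a : V, (if a ∈ M then (-1 : ℂ) else 1) * S a := by
          refine Finset.sum_congr rfl fun a _ => ?_
          rw [← Finset.mul_sum, Finset.sum_sub_distrib, ← Finset.mul_sum, hsum_const_avg]
          rw [show (∑ b ∈ G.neighborFinset a, ψ a b) = S a from rfl]
          ring_nf
  have hM0 : ∑ a : V, (if a ∈ M then S a else 0) = 0 := by
    have h2 : (2 : ℂ) * ∑ a : V, (if a ∈ M then S a else 0) = 0 := by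
      rw [Finset.mul_sum]
      have : ∀ a : V, 2 * (if a ∈ M then S a else 0)
          = S a - (if a ∈ M then (-1 : ℂ) else 1) * S a := by
        intro a; by_cases ha : a ∈ M <;> simp [ha] <;> ring
      simp_rw [this, Finset.sum_sub_distrib, hT, sub_self]
    have := mul_eq_zero.1 h2
    simpa using this
  -- overlap part
  have hinner : dInner G (psi0 G) ψ' = dInner G (psi0 G) ψ := by
    unfold dInner
    have hsum' : ∀ a : V, ∑ b ∈ G.neighborFinset a, ψ' a b
        = if a ∈ M then 0 else S a := by
      intro a
      by_cases ha : a ∈ M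
      · simp only [ha, if_true]
        have : ∀ b, ψ' a b = ψ a b - avgQ G ψ a := fun b => by rw [hdef]; simp [ha]
        rw [Finset.sum_congr rfl fun b _ => this b, Finset.sum_sub_distrib, hsum_const_avg,
          sub_self]
      · simp only [ha, if_false]
        have : ∀ b, ψ' a b = avgQ G ψ a := fun b => by rw [hdef]; simp [ha]
        rw [Finset.sum_congr rfl fun b _ => this b, hsum_const_avg]
    have key : ∀ φ : V → V → ℂ, ∑ a : V, ∑ b ∈ G.neighborFinset a,
        (starRingEnd ℂ) (psi0 G a b) * φ a b
        = (starRingEnd ℂ) (((Real.sqrt (2 * (G.edgeFinset.card : ℝ)))⁻¹ : ℝ) : ℂ)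
          * ∑ a : V, ∑ b ∈ G.neighborFinset a, φ a b := by
      intro φ
      rw [Finset.mul_sum]
      exact Finset.sum_congr rfl fun a _ => by rw [Finset.mul_sum]; rfl
    rw [key, key]
    congr 1
    have : ∑ a : V, ∑ b ∈ G.neighborFinset a, ψ' a b
        = ∑ a : V, (if a ∈ M then 0 else S a) := Finset.sum_congr rfl fun a _ => hsum' a
    rw [this]
    have : ∑ a : V, (if a ∈ M then (0 : ℂ) else S a)
        = ∑ a : V, (S a - if a ∈ M then S a else 0) := by
      refine Finset.sum_congr rfl fun a _ => ?_
      by_cases ha : a ∈ M <;> simp [ha]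
    rw [this, Finset.sum_sub_distrib, hM0, sub_zero]
  refine ⟨hinner, ?_⟩
  -- norm part
  unfold dNorm
  apply Real.sqrt_le_sqrt
  apply Finset.sum_le_sum
  intro a _
  set c : ℂ := avgQ G ψ a with hc
  set n : ℝ := (G.degree a : ℝ) with hn
  have hnpos : 0 < n := by rw [hn]; exact_mod_cast hdeg a
  have hCS : n * Complex.normSq c ≤ ∑ b ∈ G.neighborFinset a, Complex.normSq (ψ a b) := by
    have h1 : ‖S a‖ ≤ ∑ b ∈ G.neighborFinset a, ‖ψ a b‖ := by
      exact norm_sum_le (G.neighborFinset a) (fun b => ψ a b)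
    have h2 : (∑ b ∈ G.neighborFinset a, ‖ψ a b‖) ^ 2
        ≤ n * ∑ b ∈ G.neighborFinset a, ‖ψ a b‖ ^ 2 := by
      have := sq_sum_le_card_mul_sum_sq (s := G.neighborFinset a)
        (f := fun b => ‖ψ a b‖)
      rwa [SimpleGraph.card_neighborFinset_eq_degree] at this
    have h3 : Complex.normSq (S a) ≤ n * ∑ b ∈ G.neighborFinset a, Complex.normSq (ψ a b) := by
      rw [Complex.normSq_eq_norm_sq]
      calc ‖S a‖ ^ 2 ≤ (∑ b ∈ G.neighborFinset a, ‖ψ a b‖) ^ 2 := by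
            apply pow_le_pow_left₀ (norm_nonneg _) h1
        _ ≤ n * ∑ b ∈ G.neighborFinset a, ‖ψ a b‖ ^ 2 := h2
        _ = n * ∑ b ∈ G.neighborFinset a, Complex.normSq (ψ a b) := by
            simp [Complex.normSq_eq_norm_sq]
    have h4 : Complex.normSq (S a) = n ^ 2 * Complex.normSq c := by
      rw [← hSa a, Complex.normSq_mul, Complex.normSq_natCast, hn]
      ring
    nlinarith [Complex.normSq_nonneg c]
  have hPyth : ∑ b ∈ G.neighborFinset a, Complex.normSq (ψ a b - c)
      = (∑ b ∈ G.neighborFinset a, Complex.normSq (ψ a b)) - n * Complex.normSq c := by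
    have hSc : S a * (starRingEnd ℂ) c = ((n * Complex.normSq c : ℝ) : ℂ) := by
      rw [← hSa a, mul_assoc, Complex.mul_conj]
      push_cast [hn]
      ring
    have expand : ∀ b, Complex.normSq (ψ a b - c)
        = Complex.normSq (ψ a b) + Complex.normSq c - 2 * (ψ a b * (starRingEnd ℂ) c).re :=
      fun b => Complex.normSq_sub _ _
    rw [Finset.sum_congr rfl fun b _ => expand b]
    rw [Finset.sum_sub_distrib, Finset.sum_add_distrib, Finset.sum_const,
      SimpleGraph.card_neighborFinset_eq_degree, ← Finset.mul_sum]
    have hre : ∑ b ∈ G.neighborFinset a, (ψ a b * (starRingEnd ℂ) c).re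
        = n * Complex.normSq c := by
      rw [← Complex.re_sum, ← Finset.sum_mul]
      rw [show (∑ b ∈ G.neighborFinset a, ψ a b) = S a from rfl, hSc, Complex.ofReal_re]
    rw [← Complex.re_sum, ← Finset.sum_mul,
      show (∑ b ∈ G.neighborFinset a, ψ a b) = S a from rfl, hSc, Complex.ofReal_re,
      nsmul_eq_mul, ← hn]
    ring
  by_cases ha : a ∈ M
  · have : ∀ b, ψ' a b = ψ a b - c := fun b => by rw [hdef]; simp [ha, hc]
    rw [Finset.sum_congr rfl fun b _ => by rw [this b]]
    rw [hPyth]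
    have := Complex.normSq_nonneg c
    nlinarith
  · have : ∀ b, ψ' a b = c := fun b => by rw [hdef]; simp [ha, hc]
    rw [Finset.sum_congr rfl fun b _ => by rw [this b]]
    rw [Finset.sum_const, SimpleGraph.card_neighborFinset_eq_degree, nsmul_eq_mul, ← hn]
    exact hCS
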